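/- Let G be a free group with basis g₁, …, g_n, let H be a free group, and let φ, ψ : G → H be homomorphisms. If the homomorphism φ ∗ ψ : G ∗ G → H has remnant, then the equalizer subgroup Eq(φ, ψ) = { g ∈ G : φ(g) = ψ(g) } is trivial. -/

import Mathlib

/-! Basic definitions: cancellation in products of reduced words, remnant
of a homomorphism of free groups, and assorted constructions. -/

open FreeGroup

/-- `bpow w e` is `w` if `e = true` (exponent `+1`) and `w⁻¹` if `e = false`
(exponent `-1`). -/
def bpow {β : Type*} (w : FreeGroup β) (e : Bool) : FreeGroup β := if e then w else w⁻¹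

/-- The number of letters cancelled between `a` and `b` when the product `a * b`
is brought to reduced form: `(|a| + |b| - |a * b|) / 2`. -/
def cancel {β : Type*} [DecidableEq β] (a b : FreeGroup β) : ℕ :=
  (FreeGroup.norm a + FreeGroup.norm b - FreeGroup.norm (a * b)) / 2

/-- The maximal number of letters of the reduced word `η(gᵢ)` cancelled on its left
in a product `η(gⱼ)^ε * η(gᵢ)`, over all `j` and `ε = ±1` except `j = i, ε = -1`. -/
def maxLeftCancel {α β : Type*} [Fintype α] [DecidableEq α] [DecidableEq β]
    (η : FreeGroup α →* FreeGroup β) (i : α) : ℕ :=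
  (Finset.univ.filter fun je : α × Bool => je ≠ (i, false)).sup
    fun je => cancel (bpow (η (FreeGroup.of je.1)) je.2) (η (FreeGroup.of i))

/-- The maximal number of letters of the reduced word `η(gᵢ)` cancelled on its right
in a product `η(gᵢ) * η(gⱼ)^ε`, over all `j` and `ε = ±1` except `j = i, ε = -1`. -/
def maxRightCancel {α β : Type*} [Fintype α] [DecidableEq α] [DecidableEq β]
    (η : FreeGroup α →* FreeGroup β) (i : α) : ℕ :=
  (Finset.univ.filter fun je : α × Bool => je ≠ (i, false)).sup
    fun je => cancel (η (FreeGroup.of i)) (bpow (η (FreeGroup.of je.1)) je.2)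

/-- `η` has remnant: for each generator `gᵢ`, the maximal left cancellation plus the
maximal right cancellation is strictly less than the length of `η(gᵢ)`, so a nonempty
middle subword (the remnant `Rem_η(gᵢ)`) always survives. -/
def HasRemnant {α β : Type*} [Fintype α] [DecidableEq α] [DecidableEq β]
    (η : FreeGroup α →* FreeGroup β) : Prop :=
  ∀ i : α, maxLeftCancel η i + maxRightCancel η i < FreeGroup.norm (η (FreeGroup.of i))

/-- The length `|Rem_η(gᵢ)|` of the remnant word of `gᵢ`: the part of `η(gᵢ)` surviving
all maximal cancellations. -/
def remnantLength {α β : Type*} [Fintype α] [DecidableEq α] [DecidableEq β]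
    (η : FreeGroup α →* FreeGroup β) (i : α) : ℕ :=
  FreeGroup.norm (η (FreeGroup.of i)) - maxLeftCancel η i - maxRightCancel η i

/-- The remnant `Rem_η(gᵢ)` occupies positions `[maxLeftCancel η i, |η(gᵢ)| - maxRightCancel η i)`
of the reduced word `η(gᵢ)`.  It does not fully cancel in the reduced form of the product
`η(gᵢ) * w` iff the number of letters cancelled from the right end of `η(gᵢ)`, namely
`cancel (η(gᵢ)) w`, leaves some remnant letter alive. -/
def remnantSurvivesRightMul {α β : Type*} [Fintype α] [DecidableEq α] [DecidableEq β]
    (η : FreeGroup α →* FreeGroup β) (i : α) (w : FreeGroup β) : Prop :=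
  cancel (η (FreeGroup.of i)) w + maxLeftCancel η i < FreeGroup.norm (η (FreeGroup.of i))

/-- The remnant `Rem_η(gᵢ)` does not fully cancel in the reduced form of the
product `w * η(gᵢ)`. -/
def remnantSurvivesLeftMul {α β : Type*} [Fintype α] [DecidableEq α] [DecidableEq β]
    (η : FreeGroup α →* FreeGroup β) (i : α) (w : FreeGroup β) : Prop :=
  cancel w (η (FreeGroup.of i)) + maxRightCancel η i < FreeGroup.norm (η (FreeGroup.of i))

/-- The homomorphism `φ ∗ ψ : G ∗ G → H` on the free product `G ∗ G`, realized as the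
free group on `α ⊕ α`, sending the generators of the first factor via `φ` and those of
the second factor via `ψ`. -/
def prodHom {α β : Type*} (φ ψ : FreeGroup α →* FreeGroup β) :
    FreeGroup (α ⊕ α) →* FreeGroup β :=
  FreeGroup.lift (Sum.elim (fun i => φ (FreeGroup.of i)) (fun i => ψ (FreeGroup.of i)))

/-- `φ^v : g ↦ v⁻¹ φ(g) v`. -/
def conjHom {G H : Type*} [Group G] [Group H] (φ : G →* H) (v : H) : G →* H :=
  ((MulAut.conj v⁻¹).toMonoidHom).comp φ

/-- The equalizer subgroup `Eq(φ, ψ) = {g : φ g = ψ g}`. -/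
def eqSubgroup {G H : Type*} [Group G] [Group H] (φ ψ : G →* H) : Subgroup G where
  carrier := {g | φ g = ψ g}
  one_mem' := by simp
  mul_mem' := by
    intro a b ha hb
    simp only [Set.mem_setOf_eq] at *
    rw [_root_.map_mul, _root_.map_mul, ha, hb]
  inv_mem' := by
    intro a ha
    simp only [Set.mem_setOf_eq] at *
    rw [_root_.map_inv, _root_.map_inv, ha]


/-! ### Auxiliary development: reduced words and cancellation -/

namespace RemnantProof

open FreeGroup List

variable {α : Type*} [DecidableEq α]

/-- A word is reduced: no adjacent cancelling pair. -/
def RWord (L : List (α × Bool)) : Prop :=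
  List.Chain' (fun p q : α × Bool => ¬(p.1 = q.1 ∧ p.2 = !q.2)) L

lemma rword_reduce (L : List (α × Bool)) : RWord (reduce L) := by
  induction L with
  | nil => exact List.isChain_nil
  | cons x L ih =>
    rw [reduce.cons]
    rcases hL : reduce L with _ | ⟨y, t⟩
    · simp [RWord, List.Chain', List.isChain_singleton]
    · rw [hL] at ih
      by_cases hc : x.1 = y.1 ∧ x.2 = !y.2
      · show RWord (if x.1 = y.1 ∧ x.2 = !y.2 then t else x :: y :: t)
        rw [if_pos hc]; exact ih.tail
      · show RWord (if x.1 = y.1 ∧ x.2 = !y.2 then t else x :: y :: t)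
        rw [if_neg hc]; exact List.isChain_cons_cons.mpr ⟨hc, ih⟩

lemma reduce_eq_self_of_rword {L : List (α × Bool)} (h : RWord L) : reduce L = L := by
  induction L with
  | nil => rfl
  | cons x L ih =>
    rw [reduce.cons]
    rcases L with _ | ⟨y, t⟩
    · rfl
    · have h' : RWord (y :: t) := h.tail
      rw [ih h']
      have hxy : ¬(x.1 = y.1 ∧ x.2 = !y.2) := (List.isChain_cons_cons.mp h).1
      show (if x.1 = y.1 ∧ x.2 = !y.2 then t else x :: y :: t) = x :: y :: t
      rw [if_neg hxy]

omit [DecidableEq α] in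
lemma invRev_cons (x : α × Bool) (C : List (α × Bool)) :
    invRev (x :: C) = invRev C ++ [(x.1, !x.2)] := by
  simp [invRev]

omit [DecidableEq α] in
lemma invRev_append' (A B : List (α × Bool)) :
    invRev (A ++ B) = invRev B ++ invRev A := by
  simp [invRev]

omit [DecidableEq α] in
lemma mk_pair_eq_one (a : α) (b : Bool) : mk [(a, b), (a, !b)] = (1 : FreeGroup α) := by
  have : mk [(a, b), (a, !b)] = mk ([] : List (α × Bool)) :=
    Quot.sound (@Red.Step.not α [] [] a b)
  simpa [one_eq_mk] using this

/-- Cancellation decomposition for the product of two reduced words. -/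
lemma decomp : ∀ (N : ℕ) (L M : List (α × Bool)), M.length ≤ N → RWord L → RWord M →
    ∃ L₁ M₁ C, L = L₁ ++ invRev C ∧ M = C ++ M₁ ∧ reduce (L ++ M) = L₁ ++ M₁ := by
  intro N
  induction N with
  | zero =>
    intro L M hlen hL hM
    have : M = [] := List.length_eq_zero_iff.mp (Nat.le_zero.mp hlen)
    subst this
    exact ⟨L, [], [], by simp [invRev], rfl, by simpa using reduce_eq_self_of_rword hL⟩
  | succ N ih =>
    intro L M hlen hL hM
    by_cases hred : RWord (L ++ M)
    · exact ⟨L, M, [], by simp [invRev], rfl, reduce_eq_self_of_rword hred⟩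
    · have hjunc : ¬ (∀ y ∈ L.getLast?, ∀ x ∈ M.head?, ¬(y.1 = x.1 ∧ y.2 = !x.2)) := by
        intro hall
        exact hred (List.isChain_append.mpr ⟨hL, hM, hall⟩)
      push_neg at hjunc
      obtain ⟨y, hy, x, hx, hcan⟩ := hjunc
      obtain ⟨M', rfl⟩ : ∃ M', M = x :: M' := ⟨M.tail, (List.cons_head?_tail hx).symm⟩
      · have hLsplit : L.dropLast ++ [y] = L := List.dropLast_append_getLast? y hy
        have hyx : y = (x.1, !x.2) := by
          rcases hcan with ⟨h1, h2⟩
          exact Prod.ext h1 h2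
        have hyx1 : mk [y, x] = (1 : FreeGroup α) := by
          rw [hyx]
          have := mk_pair_eq_one (α := α) x.1 (!x.2)
          simpa [Bool.not_not] using this
        have hmk : mk (L ++ x :: M') = mk (L.dropLast ++ M') := by
          have hLmk : mk L = mk L.dropLast * mk [y] := by rw [mul_mk, hLsplit]
          have e1 : (x :: M') = [x] ++ M' := rfl
          rw [← mul_mk, e1, ← mul_mk, hLmk, ← mul_mk]
          rw [mul_assoc, ← mul_assoc (mk [y]), mul_mk]
          norm_num [hyx1]
        have hred_eq : reduce (L ++ x :: M') = reduce (L.dropLast ++ M') :=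
          reduce.sound hmk
        have hL' : RWord L.dropLast := hL.prefix ⟨[y], hLsplit⟩
        have hM' : RWord M' := hM.tail
        have hlen' : M'.length ≤ N := by
          simp only [List.length_cons] at hlen; omega
        obtain ⟨L₁, M₁, C, hL1, hM1, hr⟩ := ih L.dropLast M' hlen' hL' hM'
        refine ⟨L₁, M₁, x :: C, ?_, by rw [hM1]; simp, by rw [hred_eq, hr]⟩
        rw [← hLsplit, hL1, invRev_cons, hyx, List.append_assoc]

lemma toWord_rword (x : FreeGroup α) : RWord x.toWord := by
  rw [← reduce_toWord x]; exact rword_reduce _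

/-- `x * y` as concatenation with cancellation. -/
lemma mul_decomp (x y : FreeGroup α) :
    ∃ L₁ M₁ C, x.toWord = L₁ ++ invRev C ∧ y.toWord = C ++ M₁ ∧
      (x * y).toWord = L₁ ++ M₁ := by
  obtain ⟨L₁, M₁, C, h1, h2, h3⟩ :=
    decomp y.toWord.length x.toWord y.toWord le_rfl (toWord_rword x) (toWord_rword y)
  refine ⟨L₁, M₁, C, h1, h2, ?_⟩
  have hxy : x * y = mk (x.toWord ++ y.toWord) := by rw [← mul_mk, mk_toWord, mk_toWord]
  rw [hxy, toWord_mk, h3]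

lemma norm_toWord (x : FreeGroup α) : FreeGroup.norm x = x.toWord.length := rfl

lemma cancel_eq (x y : FreeGroup α) {L₁ M₁ C : List (α × Bool)}
    (h1 : x.toWord = L₁ ++ invRev C) (h2 : y.toWord = C ++ M₁)
    (h3 : (x * y).toWord = L₁ ++ M₁) : cancel x y = C.length := by
  have e1 : FreeGroup.norm x = L₁.length + C.length := by
    rw [norm_toWord, h1, List.length_append, invRev_length]
  have e2 : FreeGroup.norm y = C.length + M₁.length := by
    rw [norm_toWord, h2, List.length_append]
  have e3 : FreeGroup.norm (x * y) = L₁.length + M₁.length := by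
    rw [norm_toWord, h3, List.length_append]
  unfold cancel
  omega

lemma cancel_ge (x y : FreeGroup α) {U V D : List (α × Bool)}
    (h1 : x.toWord = U ++ invRev D) (h2 : y.toWord = D ++ V) :
    D.length ≤ cancel x y := by
  have e1 : FreeGroup.norm x = U.length + D.length := by
    rw [norm_toWord, h1, List.length_append, invRev_length]
  have e2 : FreeGroup.norm y = D.length + V.length := by
    rw [norm_toWord, h2, List.length_append]
  have hxy : x * y = mk (U ++ V) := by
    have hx : x = mk U * (mk D)⁻¹ := by
      rw [inv_mk, mul_mk, ← h1, mk_toWord]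
    have hy : y = mk D * mk V := by rw [mul_mk, ← h2, mk_toWord]
    rw [hx, hy, mul_assoc, ← mul_assoc (mk D)⁻¹, inv_mul_cancel, one_mul, mul_mk]
  have e3 : FreeGroup.norm (x * y) ≤ U.length + V.length := by
    rw [hxy]
    exact le_trans norm_mk_le (le_of_eq List.length_append)
  unfold cancel
  omega

lemma cancel_inv (x y : FreeGroup α) : cancel x y = cancel y⁻¹ x⁻¹ := by
  unfold cancel
  rw [norm_inv_eq, norm_inv_eq, ← mul_inv_rev, norm_inv_eq, Nat.add_comm]

omit [DecidableEq α] in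
lemma bpow_inv (w : FreeGroup α) (e : Bool) : (bpow w e)⁻¹ = bpow w (!e) := by
  cases e <;> simp [bpow]

lemma norm_bpow (w : FreeGroup α) (e : Bool) :
    FreeGroup.norm (bpow w e) = FreeGroup.norm w := by
  cases e <;> simp [bpow, norm_inv_eq]

omit [DecidableEq α] in
lemma suffix_of_suffix_of_le {l₁ l₂ t : List (α × Bool)}
    (h1 : l₁ <:+ t) (h2 : l₂ <:+ t) (h : l₁.length ≤ l₂.length) : l₁ <:+ l₂ := by
  have hl1 := h1.length_le
  have hl2 := h2.length_le
  have e1 := List.suffix_iff_eq_drop.mp h1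
  have e2 := List.suffix_iff_eq_drop.mp h2
  obtain ⟨a, ha⟩ : ∃ a, l₁.length = a := ⟨_, rfl⟩
  obtain ⟨b, hb⟩ : ∃ b, l₂.length = b := ⟨_, rfl⟩
  rw [ha, hb] at h
  rw [ha] at e1 hl1
  rw [hb] at e2 hl2
  have key : l₁ = l₂.drop (b - a) := by
    rw [e1, e2, List.drop_drop]
    congr 1
    omega
  rw [key]
  exact List.drop_suffix _ _

omit [DecidableEq α] in
lemma invRev_prefix_of_suffix {A B : List (α × Bool)} (h : A <:+ B) :
    invRev A <+: invRev B := by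
  obtain ⟨U, rfl⟩ := h
  exact ⟨invRev U, (invRev_append' U A).symm⟩

section Syllables

variable {β : Type*} [Fintype α] [DecidableEq β] (η : FreeGroup α →* FreeGroup β)

/-- The image of the single-letter word `x`. -/
def syl (x : α × Bool) : FreeGroup β := bpow (η (FreeGroup.of x.1)) x.2

/-- The relevant left-cancellation bound for the syllable `x`. -/
def Lc (x : α × Bool) : ℕ :=
  if x.2 then maxLeftCancel η x.1 else maxRightCancel η x.1

/-- The relevant right-cancellation bound for the syllable `x`. -/
def Rc (x : α × Bool) : ℕ :=
  if x.2 then maxRightCancel η x.1 else maxLeftCancel η x.1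

lemma norm_syl (x : α × Bool) :
    FreeGroup.norm (syl η x) = FreeGroup.norm (η (FreeGroup.of x.1)) :=
  norm_bpow _ _

lemma remnant_bound (h : HasRemnant η) (x : α × Bool) :
    Lc η x + Rc η x < FreeGroup.norm (syl η x) := by
  rcases x with ⟨i, e⟩
  have := h i
  rw [norm_syl]
  cases e <;> simp [Lc, Rc] <;> omega

lemma η_mk_single (x : α × Bool) : η (mk [x]) = syl η x := by
  rcases x with ⟨i, e⟩
  cases e
  · have h1 : mk [(i, false)] = (FreeGroup.of i)⁻¹ := by
      rw [show (FreeGroup.of i : FreeGroup α) = mk [(i, true)] from rfl, inv_mk]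
      simp [invRev]
    rw [h1]
    simp [syl, bpow]
  · rfl

lemma cancel_syl_le_Rc (x y : α × Bool) (hxy : y ≠ (x.1, !x.2)) :
    cancel (syl η x) (syl η y) ≤ Rc η x := by
  rcases x with ⟨i, e⟩
  cases e
  · -- syl x = (η (of i))⁻¹, bound by maxLeftCancel
    have heq : cancel (syl η (i, false)) (syl η y) =
        cancel (bpow (η (FreeGroup.of y.1)) (!y.2)) (η (FreeGroup.of i)) := by
      rw [cancel_inv (syl η (i, false)) (syl η y)]
      have h1 : (syl η y)⁻¹ = bpow (η (FreeGroup.of y.1)) (!y.2) := bpow_inv _ _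
      have h2 : (syl η (i, false))⁻¹ = η (FreeGroup.of i) := by
        show (bpow (η (FreeGroup.of i)) false)⁻¹ = _
        rw [bpow_inv]; rfl
      rw [h1, h2]
    rw [heq]
    show _ ≤ Rc η (i, false)
    have hmem : (y.1, !y.2) ∈ Finset.univ.filter
        fun je : α × Bool => je ≠ (i, false) := by
      simp only [Finset.mem_filter, Finset.mem_univ, true_and]
      intro hc
      have h1 : y.1 = i := congrArg Prod.fst hc
      have h2 : (!y.2) = false := congrArg Prod.snd hc
      have h3 : y.2 = true := by simpa using h2
      exact hxy (by simp [Prod.ext_iff, h1, h3])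
    simpa [Rc, maxLeftCancel] using Finset.le_sup (f := fun je : α × Bool =>
      cancel (bpow (η (FreeGroup.of je.1)) je.2) (η (FreeGroup.of i))) hmem
  · -- syl x = η (of i), bound by maxRightCancel
    have hmem : y ∈ Finset.univ.filter fun je : α × Bool => je ≠ (i, false) := by
      simp only [Finset.mem_filter, Finset.mem_univ, true_and]
      simpa using hxy
    have hle := Finset.le_sup (f := fun je : α × Bool =>
      cancel (η (FreeGroup.of i)) (bpow (η (FreeGroup.of je.1)) je.2)) hmem
    simpa [Rc, syl, bpow, maxRightCancel] using hle

lemma cancel_syl_le_Lc (x y : α × Bool) (hxy : y ≠ (x.1, !x.2)) :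
    cancel (syl η x) (syl η y) ≤ Lc η y := by
  rcases y with ⟨j, e⟩
  cases e
  · -- syl y = (η (of j))⁻¹, bound by maxRightCancel
    have heq : cancel (syl η x) (syl η (j, false)) =
        cancel (η (FreeGroup.of j)) (bpow (η (FreeGroup.of x.1)) (!x.2)) := by
      rw [cancel_inv (syl η x) (syl η (j, false))]
      have h1 : (syl η x)⁻¹ = bpow (η (FreeGroup.of x.1)) (!x.2) := bpow_inv _ _
      have h2 : (syl η (j, false))⁻¹ = η (FreeGroup.of j) := by
        show (bpow (η (FreeGroup.of j)) false)⁻¹ = _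
        rw [bpow_inv]; rfl
      rw [h1, h2]
    rw [heq]
    have hmem : (x.1, !x.2) ∈ Finset.univ.filter
        fun je : α × Bool => je ≠ (j, false) := by
      simp only [Finset.mem_filter, Finset.mem_univ, true_and]
      intro hc
      exact hxy hc.symm
    have hle := Finset.le_sup (f := fun je : α × Bool =>
      cancel (η (FreeGroup.of j)) (bpow (η (FreeGroup.of je.1)) je.2)) hmem
    simpa [Lc, maxRightCancel] using hle
  · -- syl y = η (of j), bound by maxLeftCancel
    have hmem : x ∈ Finset.univ.filter fun je : α × Bool => je ≠ (j, false) := by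
      simp only [Finset.mem_filter, Finset.mem_univ, true_and]
      intro hc
      exact hxy (by simp [hc])
    have hle := Finset.le_sup (f := fun je : α × Bool =>
      cancel (bpow (η (FreeGroup.of je.1)) je.2) (η (FreeGroup.of j))) hmem
    simpa [Lc, syl, bpow, maxLeftCancel] using hle

/-- Main induction: for a nonempty reduced word `w`, a nontrivial part of the remnant of
the last syllable survives in `η (mk w)`. -/
lemma survive (h : HasRemnant η) :
    ∀ (w : List (α × Bool)), RWord w → ∀ x ∈ w.getLast?,
    ∃ A S, (η (mk w)).toWord = A ++ S ∧ S <:+ (syl η x).toWord ∧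
      Rc η x < S.length := by
  intro w
  induction w using List.reverseRecOn with
  | nil => intro _ x hx; simp at hx
  | append_singleton w x ih =>
    intro hRW x' hx'
    rw [List.getLast?_concat] at hx'
    obtain rfl : x = x' := Option.some_injective _ hx' 
    have hprod_eq : η (mk (w ++ [x])) = η (mk w) * syl η x := by
      rw [← mul_mk, _root_.map_mul, η_mk_single]
    rcases eq_or_ne w [] with rfl | hw
    · refine ⟨[], (syl η x).toWord, ?_, List.suffix_refl _, ?_⟩
      · rw [hprod_eq, ← one_eq_mk, _root_.map_one, one_mul, List.nil_append]
      · have := remnant_bound η h x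
        rw [norm_toWord] at this
        omega
    · -- inductive step
      have hy : w.getLast hw ∈ w.getLast? := by
        rw [List.getLast?_eq_getLast_of_ne_nil hw]; rfl
      set y := w.getLast hw with hydef
      have hRWw : RWord w := hRW.prefix ⟨[x], rfl⟩
      obtain ⟨A, S, hAS, hSsuf, hSlen⟩ := ih hRWw y hy
      -- adjacency of y and x
      have hadj : x ≠ (y.1, !y.2) := by
        have hchain := (List.isChain_append.mp hRW).2.2 y hy x (by simp)
        intro hc
        apply hchain
        constructor
        · rw [hc]
        · rw [hc]; simp
      -- the cancellation bound between the syllables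
      have hyR : cancel (syl η y) (syl η x) ≤ Rc η y := cancel_syl_le_Rc η y x hadj
      have hyL : cancel (syl η y) (syl η x) ≤ Lc η x := cancel_syl_le_Lc η y x hadj
      obtain ⟨L₁, M₁, C, hPL, hsC, hprod⟩ := mul_decomp (η (mk w)) (syl η x)
      have hCsuf : invRev C <:+ (η (mk w)).toWord := ⟨L₁, hPL.symm⟩
      have hSsuf' : S <:+ (η (mk w)).toWord := ⟨A, hAS.symm⟩
      -- C is at most the syllable-to-syllable cancellation
      have hC : C.length ≤ cancel (syl η y) (syl η x) := by
        rcases le_or_gt C.length S.length with hle | hlt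
        · -- invRev C is a suffix of S, hence of toWord (syl η y)
          have h1 : invRev C <:+ S :=
            suffix_of_suffix_of_le (by simpa [invRev_length] using hCsuf) hSsuf'
              (by simpa [invRev_length] using hle)
          have h2 : invRev C <:+ (syl η y).toWord := h1.trans hSsuf
          obtain ⟨X, hX⟩ := h2
          exact cancel_ge (syl η y) (syl η x) hX.symm hsC
        · -- S is a suffix of invRev C; whole remnant would cancel, contradiction
          exfalso
          have h1 : S <:+ invRev C :=
            suffix_of_suffix_of_le hSsuf' hCsuf (by rw [invRev_length]; omega)
          have h2 : invRev S <+: C := by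
            have := invRev_prefix_of_suffix h1
            rwa [invRev_invRev] at this
          have h3 : invRev S <+: (syl η x).toWord := h2.trans ⟨M₁, hsC.symm⟩
          obtain ⟨Z, hZ⟩ := h3
          obtain ⟨X, hX⟩ := hSsuf
          have h4 : S.length ≤ cancel (syl η y) (syl η x) := by
            have := cancel_ge (syl η y) (syl η x) (U := X) (D := invRev S) (V := Z)
              (by rw [invRev_invRev]; exact hX.symm) hZ.symm
            simpa [invRev_length] using this
          omega
      refine ⟨L₁, M₁, by rw [hprod_eq]; exact hprod, ⟨C, hsC.symm⟩, ?_⟩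
      have hns : FreeGroup.norm (syl η x) = C.length + M₁.length := by
        rw [norm_toWord, hsC, List.length_append]
      have hrem := remnant_bound η h x
      omega

end Syllables

end RemnantProof

/-- If `φ ∗ ψ : G ∗ G → H` has remnant, then `Eq(φ, ψ)` is trivial. -/
theorem equalizer_eq_bot_of_hasRemnant {n : ℕ} {β : Type*} [DecidableEq β]
    (φ ψ : FreeGroup (Fin n) →* FreeGroup β)
    (h : HasRemnant (prodHom φ ψ)) :
    eqSubgroup φ ψ = ⊥ := by
  classical
  rw [eq_bot_iff]
  intro g hg
  simp only [Subgroup.mem_bot]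
  by_contra hg1
  have hgeq : φ g = ψ g := hg
  set η := prodHom φ ψ with hη
  -- the two embeddings of G into G ∗ G
  set ι₁ : FreeGroup (Fin n) →* FreeGroup (Fin n ⊕ Fin n) :=
    FreeGroup.lift (fun i => FreeGroup.of (Sum.inl i)) with hι₁
  set ι₂ : FreeGroup (Fin n) →* FreeGroup (Fin n ⊕ Fin n) :=
    FreeGroup.lift (fun i => FreeGroup.of (Sum.inr i)) with hι₂
  set x : FreeGroup (Fin n ⊕ Fin n) := ι₁ g * (ι₂ g)⁻¹ with hx
  -- η kills x
  have hcomp1 : η.comp ι₁ = φ := by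
    apply FreeGroup.ext_hom
    intro a
    simp [hη, hι₁, prodHom]
  have hcomp2 : η.comp ι₂ = ψ := by
    apply FreeGroup.ext_hom
    intro a
    simp [hη, hι₂, prodHom]
  have hηx : η x = 1 := by
    have h1 : η (ι₁ g) = φ g := by rw [← hcomp1]; rfl
    have h2 : η (ι₂ g) = ψ g := by rw [← hcomp2]; rfl
    rw [hx, _root_.map_mul, _root_.map_inv, h1, h2, hgeq, mul_inv_cancel]
  -- x is nontrivial
  have hxne : x ≠ 1 := by
    set π : FreeGroup (Fin n ⊕ Fin n) →* FreeGroup (Fin n) :=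
      FreeGroup.lift (Sum.elim FreeGroup.of (fun _ => (1 : FreeGroup (Fin n)))) with hπ
    have h1 : π (ι₁ g) = g := by
      have : π.comp ι₁ = MonoidHom.id _ := by
        apply FreeGroup.ext_hom
        intro a
        simp [hπ, hι₁]
      calc π (ι₁ g) = (π.comp ι₁) g := rfl
        _ = g := by rw [this]; rfl
    have h2 : π (ι₂ g) = 1 := by
      have : π.comp ι₂ = 1 := by
        apply FreeGroup.ext_hom
        intro a
        simp [hπ, hι₂]
      calc π (ι₂ g) = (π.comp ι₂) g := rfl
        _ = 1 := by rw [this]; rfl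
    intro hc
    apply hg1
    have : π x = g := by rw [hx, _root_.map_mul, _root_.map_inv, h1, h2, inv_one, mul_one]
    rw [hc, _root_.map_one] at this
    exact this.symm
  -- apply the survival lemma to the reduced word of x
  have hwne : x.toWord ≠ [] := by
    intro hc
    exact hxne (FreeGroup.toWord_eq_nil_iff.mp hc)
  have hy : x.toWord.getLast hwne ∈ x.toWord.getLast? := by
    rw [List.getLast?_eq_getLast_of_ne_nil hwne]; rfl
  obtain ⟨A, S, hAS, _, hSlen⟩ :=
    RemnantProof.survive η h x.toWord (RemnantProof.toWord_rword x)
      (x.toWord.getLast hwne) hy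
  rw [FreeGroup.mk_toWord, hηx] at hAS
  have : (A ++ S).length = 0 := by rw [← hAS]; simp
  rw [List.length_append] at this
  omega
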